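/- Let m be a positive natural number, let a, μ ∈ ℝᵐ, let P be a real m×m matrix, let b ∈ ℝ, and let c ≥ 0. Then the (m+1)×(m+1) block matrix [[I_m, √c · Pᵀa], [√c · (Pᵀa)ᵀ, ⟪a, μ⟫ − b]] (with I_m the m×m identity, Pᵀa a column vector, and ⟪a, μ⟫ − b a scalar) is positive semidefinite if and only if ⟪a, μ⟫ − c · ‖Pᵀa‖² ≥ b; equivalently, writing Σ = P·Pᵀ, if and only if aᵀμ − c · aᵀΣa ≥ b. -/

import Mathlib

open Matrix

lemma one_by_one_posSemidef_iff (r : ℝ) :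
    (Matrix.of fun _ _ : Fin 1 => r).PosSemidef ↔ 0 ≤ r := by
  constructor
  · intro h
    have := (posSemidef_iff_dotProduct_mulVec.mp h).2 (fun _ => 1)
    simpa [Matrix.mulVec, dotProduct, Fin.sum_univ_one] using this
  · intro hr
    refine posSemidef_iff_dotProduct_mulVec.mpr ⟨?_, ?_⟩
    · ext i j
      fin_cases i <;> fin_cases j <;> simp [Matrix.conjTranspose]
    · intro x
      have : x ⬝ᵥ ((Matrix.of fun _ _ : Fin 1 => r) *ᵥ x) = r * (x 0 * x 0) := by
        simp [Matrix.mulVec, dotProduct, Fin.sum_univ_one]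
        ring
      rw [star_trivial, this]
      exact mul_nonneg hr (mul_self_nonneg _)

/-- Schur-complement reformulation of the chance-constrained CBF condition:
the block matrix `[[I, √c · Pᵀa], [√c · (Pᵀa)ᵀ, ⟪a, μ⟫ - b]]` is positive semidefinite
iff `⟪a, μ⟫ - c‖Pᵀa‖² ≥ b`, equivalently (with `Σ = PPᵀ`) iff `aᵀμ - c·aᵀΣa ≥ b`. -/
theorem fromBlocks_posSemidef_iff_cbf_constraint
    (m : ℕ) (hm : 0 < m) (a μ : Fin m → ℝ) (P : Matrix (Fin m) (Fin m) ℝ)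
    (b c : ℝ) (hc : 0 ≤ c) :
    ((Matrix.fromBlocks
        (1 : Matrix (Fin m) (Fin m) ℝ)
        (Matrix.replicateCol (Fin 1) (Real.sqrt c • (Pᵀ *ᵥ a)))
        (Matrix.replicateCol (Fin 1) (Real.sqrt c • (Pᵀ *ᵥ a)))ᵀ
        (Matrix.of fun _ _ : Fin 1 => a ⬝ᵥ μ - b)).PosSemidef
      ↔ a ⬝ᵥ μ - c * ((Pᵀ *ᵥ a) ⬝ᵥ (Pᵀ *ᵥ a)) ≥ b)
    ∧ (a ⬝ᵥ μ - c * ((Pᵀ *ᵥ a) ⬝ᵥ (Pᵀ *ᵥ a)) ≥ b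
      ↔ a ⬝ᵥ μ - c * (a ⬝ᵥ ((P * Pᵀ) *ᵥ a)) ≥ b) := by
  set v := Pᵀ *ᵥ a with hv
  set B := Matrix.replicateCol (Fin 1) (Real.sqrt c • v) with hB
  constructor
  · haveI : Invertible (1 : Matrix (Fin m) (Fin m) ℝ) := invertibleOne
    have hBT : Bᵀ = Bᴴ := (Matrix.conjTranspose_eq_transpose_of_trivial B).symm
    rw [hBT, Matrix.PosDef.fromBlocks₁₁ B _ Matrix.PosDef.one]
    have hBB : Bᴴ * (1:Matrix (Fin m) (Fin m) ℝ)⁻¹ * B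
        = Matrix.of fun _ _ : Fin 1 => c * (v ⬝ᵥ v) := by
      rw [inv_one, Matrix.mul_one]
      ext i j
      simp only [Matrix.mul_apply, Matrix.conjTranspose_apply, hB, Matrix.replicateCol_apply,
        Pi.smul_apply, smul_eq_mul, star_trivial, Matrix.of_apply, dotProduct,
        Finset.mul_sum]
      refine Finset.sum_congr rfl fun k _ => ?_
      rw [mul_mul_mul_comm, Real.mul_self_sqrt hc]
    have hschur : ((Matrix.of fun _ _ : Fin 1 => a ⬝ᵥ μ - b) - Bᴴ * (1:Matrix (Fin m) (Fin m) ℝ)⁻¹ * B)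
        = Matrix.of fun _ _ : Fin 1 => (a ⬝ᵥ μ - c * (v ⬝ᵥ v)) - b := by
      rw [hBB]; ext i j
      simp [Matrix.sub_apply]; ring
    rw [hschur, one_by_one_posSemidef_iff]
    constructor <;> intro h <;> linarith
  · have : a ⬝ᵥ ((P * Pᵀ) *ᵥ a) = v ⬝ᵥ v := by
      rw [← Matrix.mulVec_mulVec, dotProduct_mulVec, hv, ← Matrix.mulVec_transpose]
    rw [this]
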